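/- The abelian group ∏_{m=1}^∞ ℤ/mℤ (the product of the cyclic groups ℤ/mℤ over all positive integers m) is isomorphic to the abelian group ∏_p 𝔽_p^×, the product over all prime numbers p of the multiplicative groups of the finite prime fields 𝔽_p. -/

import Mathlib

/-- Additive pi-congruence along a plain equivalence of index types (same family). -/
def myPiCongrLeft' {ι ι' : Type*} (M : ι → Type*) [∀ i, Add (M i)] (e : ι ≃ ι') :
    (∀ i, M i) ≃+ ∀ i', M (e.symm i') :=
  { Equiv.piCongrLeft' M e with map_add' := fun _ _ => rfl }

/-- Additive currying of a pi type over a sigma type. -/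
def myPiCurry {α : Type*} {β : α → Type*} (γ : ∀ a, β a → Type*) [∀ a b, Add (γ a b)] :
    (∀ x : Σ i, β i, γ x.1 x.2) ≃+ ∀ a b, γ a b :=
  { Equiv.piCurry γ with map_add' := fun _ _ => rfl }

/-- Additive swap of a double pi type. -/
def myPiComm {ι κ : Type*} (M : ι → κ → Type*) [∀ i k, Add (M i k)] :
    (∀ i k, M i k) ≃+ ∀ k i, M i k :=
  { Equiv.piComm M with map_add' := fun _ _ => rfl }

/-- Dropping subsingleton factors from a product. -/
def myRestrict {ι : Type*} (M : ι → Type*) [∀ i, AddZeroClass (M i)] (p : ι → Prop)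
    [DecidablePred p] (h : ∀ i, ¬ p i → Subsingleton (M i)) :
    (∀ i, M i) ≃+ ∀ i : Subtype p, M i.1 where
  toFun f i := f i.1
  invFun f i := if hp : p i then f ⟨i, hp⟩ else 0
  left_inv f := funext fun i => by
    by_cases hp : p i
    · simp [hp]
    · have := h i hp; exact Subsingleton.elim _ _
  right_inv f := funext fun i => by simp [i.2]
  map_add' _ _ := rfl

def zmodCongr {a b : ℕ} (h : a = b) : ZMod a ≃+ ZMod b := by subst h; exact AddEquiv.refl _

/-- CRT: `ZMod m` as product over all primes of its local components. -/
noncomputable def crtEquiv (m : ℕ) (hm : m ≠ 0) :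
    ZMod m ≃+ ∀ q : Nat.Primes, ZMod (q.1 ^ m.factorization q.1) := by
  have coprime : Pairwise (Function.onFun Nat.Coprime
      fun q : m.primeFactors => q.1 ^ m.factorization q.1) := by
    intro a b hab
    exact ((Nat.coprime_primes (Nat.prime_of_mem_primeFactors a.2)
      (Nat.prime_of_mem_primeFactors b.2)).mpr (fun h => hab (Subtype.ext h))).pow _ _
  have hprod : (∏ q : m.primeFactors, q.1 ^ m.factorization q.1) = m := by
    have h2 := Nat.factorization_prod_pow_eq_self hm
    rw [Finsupp.prod, Nat.support_factorization] at h2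
    rw [Finset.prod_coe_sort m.primeFactors (fun q => q ^ m.factorization q)]
    exact h2
  have key : ∀ q : Nat.Primes, ¬ q.1 ∈ m.primeFactors →
      Subsingleton (ZMod (q.1 ^ m.factorization q.1)) := by
    intro q hq
    have h0 : m.factorization q.1 = 0 := by
      rw [← Nat.support_factorization] at hq
      exact Finsupp.notMem_support_iff.mp hq
    rw [h0, pow_zero]
    infer_instance
  classical
  let e : {q : Nat.Primes // q.1 ∈ m.primeFactors} ≃ m.primeFactors :=
    ⟨fun q => ⟨q.1.1, q.2⟩, fun q => ⟨⟨q.1, Nat.prime_of_mem_primeFactors q.2⟩, q.2⟩,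
     fun q => rfl, fun q => rfl⟩
  exact (zmodCongr hprod.symm).trans <| (ZMod.prodEquivPi _ coprime).toAddEquiv.trans <|
    (myPiCongrLeft' (fun q : m.primeFactors => ZMod (q.1 ^ m.factorization q.1)) e.symm).trans
    (myRestrict (fun q : Nat.Primes => ZMod (q.1 ^ m.factorization q.1)) _ key).symm

/-- Regrouping a product of local cyclic groups by the exponent. -/
noncomputable def fiberEquiv {ι : Type*} [Countable ι] (q : ℕ) (v : ι → ℕ)
    (hv : ∀ k : ℕ, k ≠ 0 → {i | v i = k}.Infinite) :
    (∀ i, ZMod (q ^ v i)) ≃+ ∀ (k : {k : ℕ // k ≠ 0}) (_ : ℕ), ZMod (q ^ k.1) := by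
  classical
  let σ := Equiv.sigmaFiberEquiv v
  have e1 := myPiCongrLeft' (fun i => ZMod (q ^ v i)) σ.symm
  have e2 := myPiCurry (fun (k : ℕ) (i : {i // v i = k}) => ZMod (q ^ v i.1))
  have e3 : ∀ k : ℕ, (∀ i : {i // v i = k}, ZMod (q ^ v i.1)) ≃+
      ({i // v i = k} → ZMod (q ^ k)) :=
    fun k => AddEquiv.piCongrRight fun i => zmodCongr (by rw [i.2])
  have key : ∀ k : ℕ, ¬ k ≠ 0 → Subsingleton ({i // v i = k} → ZMod (q ^ k)) := by
    intro k hk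
    rw [not_not] at hk; subst hk; rw [pow_zero]; infer_instance
  have e5 : ∀ k : {k : ℕ // k ≠ 0}, ({i // v i = k.1} → ZMod (q ^ k.1)) ≃+
      (ℕ → ZMod (q ^ k.1)) := by
    intro k
    haveI : Infinite {i // v i = k.1} := (hv k.1 k.2).to_subtype
    have ee : {i // v i = k.1} ≃ ℕ := Nonempty.some inferInstance
    exact (myPiCongrLeft' (fun _ => ZMod (q ^ k.1)) ee.symm).symm
  exact e1.trans <| e2.trans <| (AddEquiv.piCongrRight e3).trans <|
    (myRestrict _ _ key).trans (AddEquiv.piCongrRight e5)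

/-- The canonical form of a countable product of cyclic groups all of whose
prime-power local factors occur infinitely often. -/
noncomputable def canonEquiv {ι : Type*} [Countable ι] (n : ι → ℕ) (hn : ∀ i, n i ≠ 0)
    (hinf : ∀ q k : ℕ, q.Prime → k ≠ 0 → {i | (n i).factorization q = k}.Infinite) :
    (∀ i, ZMod (n i)) ≃+
      ∀ (q : Nat.Primes) (k : {k : ℕ // k ≠ 0}) (_ : ℕ), ZMod (q.1 ^ k.1) := by
  have e1 := AddEquiv.piCongrRight (fun i => crtEquiv (n i) (hn i))
  have e2 := myPiComm (fun (i : ι) (q : Nat.Primes) => ZMod (q.1 ^ (n i).factorization q.1))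
  have e3 : ∀ q : Nat.Primes, _ := fun q : Nat.Primes =>
    fiberEquiv q.1 (fun i => (n i).factorization q.1) (fun k hk => hinf q.1 k q.2 hk)
  exact e1.trans <| e2.trans <| AddEquiv.piCongrRight e3

lemma fact_qk (q k t : ℕ) (hq : q.Prime) : (q ^ k * (q * t + 1)).factorization q = k := by
  have h1 : ¬ q ∣ q * t + 1 := by
    intro h
    have h2 : q ∣ 1 := (Nat.dvd_add_right (Dvd.intro t rfl)).mp h
    have := Nat.le_of_dvd one_pos h2
    have := hq.two_le
    omega
  rw [Nat.factorization_mul (pow_ne_zero _ hq.pos.ne') (Nat.succ_ne_zero _), Finsupp.add_apply,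
    hq.factorization_pow, Finsupp.single_eq_same, Nat.factorization_eq_zero_of_not_dvd h1]
  omega

lemma pnat_inf (q k : ℕ) (hq : q.Prime) (hk : k ≠ 0) :
    {m : ℕ+ | (m : ℕ).factorization q = k}.Infinite := by
  apply Set.infinite_of_injective_forall_mem
    (f := fun t : ℕ => (⟨q ^ k * (q * t + 1), Nat.mul_pos (pow_pos hq.pos k) (Nat.succ_pos _)⟩ : ℕ+))
  · intro a b hab
    have h : q ^ k * (q * a + 1) = q ^ k * (q * b + 1) := congrArg (fun x : ℕ+ => (x : ℕ)) hab
    have h2 := Nat.eq_of_mul_eq_mul_left (pow_pos hq.pos k) h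
    have h3 : q * a = q * b := by omega
    exact Nat.eq_of_mul_eq_mul_left hq.pos h3
  · intro t
    exact fact_qk q k t hq

lemma primes_inf (q k : ℕ) (hq : q.Prime) (hk : k ≠ 0) :
    {p : Nat.Primes | ((p : ℕ) - 1).factorization q = k}.Infinite := by
  set N := q ^ (k + 1) with hN
  haveI : NeZero N := ⟨pow_ne_zero _ hq.pos.ne'⟩
  have hq2 := hq.two_le
  have hqk2 : 2 ≤ q ^ k := le_trans hq2 (Nat.le_self_pow hk q)
  have hlt : 1 + q ^ k < N := by
    have : q ^ k * 2 ≤ q ^ k * q := Nat.mul_le_mul_left _ hq2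
    rw [hN, pow_succ]
    omega
  have hnd : ¬ q ∣ 1 + q ^ k := by
    intro h
    have h2 : q ∣ q ^ k := dvd_pow_self q hk
    have h3 : q ∣ 1 := (Nat.dvd_add_right h2).mp (by rwa [Nat.add_comm] at h)
    have := Nat.le_of_dvd one_pos h3
    omega
  have hcop : Nat.Coprime (1 + q ^ k) N :=
    Nat.Coprime.pow_right _ (Nat.coprime_comm.mp ((Nat.Prime.coprime_iff_not_dvd hq).mpr hnd))
  have hu : IsUnit ((1 + q ^ k : ℕ) : ZMod N) := (ZMod.isUnit_iff_coprime _ N).mpr hcop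
  have hS := Nat.infinite_setOfPred_prime_and_eq_mod hu
  apply Set.Infinite.of_image (Subtype.val)
  apply Set.Infinite.mono _ hS
  rintro p ⟨hp, hcast⟩
  have hmod : p % N = 1 + q ^ k := by
    have h := (ZMod.natCast_eq_natCast_iff _ _ _).mp hcast
    rwa [Nat.ModEq, Nat.mod_eq_of_lt hlt] at h
  have hdm := Nat.div_add_mod p N
  rw [hmod] at hdm
  set t := p / N with ht
  have hNt : N * t = q ^ k * (q * t) := by rw [hN, pow_succ]; ring
  have hexp : q ^ k * (q * t + 1) = q ^ k * (q * t) + q ^ k := by ring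
  have hp1 : p - 1 = q ^ k * (q * t + 1) := by omega
  exact ⟨⟨p, hp⟩, by show ((p : ℕ) - 1).factorization q = k; rw [hp1]; exact fact_qk q k t hq, rfl⟩

noncomputable def unitsAddEquiv (p : Nat.Primes) : Additive (ZMod p.1)ˣ ≃+ ZMod (p.1 - 1) := by
  haveI : Fact p.1.Prime := ⟨p.2⟩
  have hc : IsCyclic (ZMod p.1)ˣ := inferInstance
  have hcard : Nat.card (ZMod p.1)ˣ = p.1 - 1 := by
    rw [Nat.card_eq_fintype_card, ZMod.card_units_eq_totient, Nat.totient_prime p.2]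
  exact (MulEquiv.toAdditiveLeft ((zmodCyclicMulEquiv hc).symm)).trans (zmodCongr hcard)

def additivePi {ι : Type*} (M : ι → Type*) [∀ i, Mul (M i)] :
    Additive (∀ i, M i) ≃+ ∀ i, Additive (M i) where
  toFun f i := Additive.ofMul (Additive.toMul f i)
  invFun f := Additive.ofMul fun i => Additive.toMul (f i)
  left_inv _ := rfl
  right_inv _ := rfl
  map_add' _ _ := rfl

/-- The abelian group `∏_{m=1}^∞ ℤ/mℤ` is isomorphic to `∏_p 𝔽_p^×`, the
product over all primes `p` of the multiplicative groups of the finite prime fields. -/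
theorem statement4 :
    Nonempty ((∀ m : ℕ+, ZMod m) ≃+ Additive (∀ p : Nat.Primes, (ZMod p.1)ˣ)) := by
  have hL := canonEquiv (fun m : ℕ+ => (m : ℕ)) (fun m => m.pos.ne')
    (fun q k hq hk => pnat_inf q k hq hk)
  have hR := canonEquiv (fun p : Nat.Primes => p.1 - 1)
    (fun p => by show p.1 - 1 ≠ 0; have := p.2.two_le; omega)
    (fun q k hq hk => primes_inf q k hq hk)
  exact ⟨hL.trans <| hR.symm.trans <|
    (AddEquiv.piCongrRight (fun p => (unitsAddEquiv p).symm)).trans (additivePi _).symm⟩
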